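/- Under the standing hypotheses, assume in addition 0 < η < e^{σ}, 1 + ηe^{−σ} < e^{−σ/2}, and σ + u > 0. Let x ∈ ℝ³ with |P_L x| = 1 and 0 < x₃ < 1, let t > 0 satisfy 0 < G₃(s,x) < 1 for s ∈ [0,t) and G₃(t,x) = 1, and let n be the largest integer in [0,t). Then n > (1/(u + log 2))·log(1/x₃) − 1. Moreover, for any r > 0 and any δ* ∈ (0,1) with 1 + (2/σ)·log r < (1/(u + log 2))·log(1/δ*) − 1, if in addition x₃ < δ* then |G(t,x) − e₃| = |P_L G(t,x)| < r. -/

import Mathlib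

noncomputable section
open Real Set

abbrev R3 := EuclideanSpace ℝ (Fin 3)

/-- Orthogonal projection onto `L = ℝe₁ ⊕ ℝe₂`. -/
def PL (x : R3) : R3 := WithLp.toLp 2 fun (i : Fin 3) => if (i : ℕ) = 2 then 0 else x i

/-- Orthogonal projection onto `U = ℝe₃`. -/
def PU (x : R3) : R3 := WithLp.toLp 2 fun (i : Fin 3) => if (i : ℕ) = 2 then x i else 0

/-- The plane `L = ℝe₁ ⊕ ℝe₂`. -/
def Lset : Set R3 := {x | x 2 = 0}

/-- The line `U = ℝe₃`. -/
def Uset : Set R3 := {x | x 0 = 0 ∧ x 1 = 0}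

/-- `B₁ = {x : |P_L x| ≤ 1, |P_U x| ≤ 1}`. -/
def B1 : Set R3 := {x | ‖PL x‖ ≤ 1 ∧ ‖PU x‖ ≤ 1}

/-- The linearized flow `T(t)`. -/
def Tmap (σ μ u t : ℝ) (x : R3) : R3 := WithLp.toLp 2 fun (i : Fin 3) =>
  if (i : ℕ) = 0 then exp (σ * t) * (cos (μ * t) * x 0 + sin (μ * t) * x 1)
  else if (i : ℕ) = 1 then exp (σ * t) * (-(sin (μ * t)) * x 0 + cos (μ * t) * x 1)
  else exp (u * t) * x 2

/-- A C¹ flow on ℝ³. -/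
def IsC1Flow (G : ℝ → R3 → R3) : Prop :=
  ContDiff ℝ 1 (fun p : ℝ × R3 => G p.1 p.2) ∧ (∀ x, G 0 x = x) ∧
    ∀ s t x, G (t + s) x = G t (G s x)

/-- `M` is invariant under the flow `G` in the set `N`. -/
def InvariantIn (G : ℝ → R3 → R3) (M N : Set R3) : Prop :=
  ∀ x ∈ M ∩ N, ∀ I : Set ℝ, (0 : ℝ) ∈ I → I.OrdConnected →
    (∀ t ∈ I, G t x ∈ N) → ∀ t ∈ I, G t x ∈ M

/-- The third basis vector `e₃`. -/
def e3 : R3 := WithLp.toLp 2 fun (i : Fin 3) => if (i : ℕ) = 2 then 1 else 0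

lemma norm3 (v : R3) : ‖v‖ = Real.sqrt ((v 0)^2 + (v 1)^2 + (v 2)^2) := by
  rw [EuclideanSpace.norm_eq]; simp [Fin.sum_univ_three, sq_abs]

lemma normPL (v : R3) : ‖PL v‖ = Real.sqrt ((v 0)^2 + (v 1)^2) := by
  rw [norm3]; simp [PL]

lemma normPU (v : R3) : ‖PU v‖ = |v 2| := by
  rw [norm3]; simp [PU, Real.sqrt_sq_eq_abs]

lemma normPL_le (v : R3) : ‖PL v‖ ≤ ‖v‖ := by
  rw [normPL, norm3]
  apply Real.sqrt_le_sqrt; nlinarith [sq_nonneg (v 2)]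

lemma abs2_le (v : R3) : |v 2| ≤ ‖v‖ := by
  rw [norm3, ← Real.sqrt_sq_eq_abs]
  apply Real.sqrt_le_sqrt; nlinarith [sq_nonneg (v 0), sq_nonneg (v 1)]

lemma PL_PL (v : R3) : PL (PL v) = PL v := by
  ext i; simp only [PL, PiLp.toLp_apply]; split <;> rfl

lemma PU_PL (v : R3) : PU (PL v) = 0 := by
  ext i
  show (if (i:ℕ) = 2 then PL v i else 0) = (0:ℝ)
  simp only [PL, PiLp.toLp_apply]; split_ifs <;> simp_all

lemma PL_PU (v : R3) : PL (PU v) = 0 := by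
  ext i; simp only [PL, PU, PiLp.toLp_apply]; split <;> rfl

lemma PU_PU (v : R3) : PU (PU v) = PU v := by
  ext i; simp only [PU, PiLp.toLp_apply]; split <;> rfl

lemma sub_PL (v : R3) : v - PL v = PU v := by
  ext i
  show v i - PL v i = PU v i
  simp only [PL, PU, PiLp.toLp_apply]; split <;> simp

lemma sub_PU (v : R3) : v - PU v = PL v := by
  ext i
  show v i - PU v i = PL v i
  simp only [PL, PU, PiLp.toLp_apply]; split <;> simp

lemma PL_in_B1 {v : R3} (hv : v ∈ B1) : PL v ∈ B1 := by
  refine ⟨?_, ?_⟩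
  · rw [PL_PL]; exact hv.1
  · rw [PU_PL]; simp

lemma PU_in_B1 {v : R3} (hv : v ∈ B1) : PU v ∈ B1 := by
  refine ⟨?_, ?_⟩
  · rw [PL_PU]; simp
  · rw [PU_PU]; exact hv.2

lemma PL_sub (a b : R3) : PL (a - b) = PL a - PL b := by
  ext i
  show _ = PL a i - PL b i
  simp only [PL, PiLp.toLp_apply]; split <;> [simp; rfl]

lemma PL_add (a b : R3) : PL (a + b) = PL a + PL b := by
  ext i
  show _ = PL a i + PL b i
  simp only [PL, PiLp.toLp_apply]; split <;> [simp; rfl]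

lemma PL_smul (c : ℝ) (a : R3) : PL (c • a) = c • PL a := by
  ext i
  show _ = c * PL a i
  simp only [PL, PiLp.toLp_apply]; split <;> simp

lemma PU_smul (c : ℝ) (a : R3) : PU (c • a) = c • PU a := by
  ext i
  show _ = c * PU a i
  simp only [PU, PiLp.toLp_apply]; split <;> simp

lemma PU_add (a b : R3) : PU (a + b) = PU a + PU b := by
  ext i
  show _ = PU a i + PU b i
  simp only [PU, PiLp.toLp_apply]; split <;> simp

lemma convex_B1 : Convex ℝ B1 := by
  intro p hp q hq a b ha hb hab
  constructor
  · rw [PL_add, PL_smul, PL_smul]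
    calc ‖a • PL p + b • PL q‖ ≤ ‖a • PL p‖ + ‖b • PL q‖ := norm_add_le _ _
    _ = a * ‖PL p‖ + b * ‖PL q‖ := by
        rw [norm_smul, norm_smul, Real.norm_of_nonneg ha, Real.norm_of_nonneg hb]
    _ ≤ a * 1 + b * 1 := by
        have := hp.1; have := hq.1; gcongr
    _ = 1 := by linarith
  · rw [PU_add, PU_smul, PU_smul]
    calc ‖a • PU p + b • PU q‖ ≤ ‖a • PU p‖ + ‖b • PU q‖ := norm_add_le _ _
    _ = a * ‖PU p‖ + b * ‖PU q‖ := by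
        rw [norm_smul, norm_smul, Real.norm_of_nonneg ha, Real.norm_of_nonneg hb]
    _ ≤ a * 1 + b * 1 := by
        have := hp.2; have := hq.2; gcongr
    _ = 1 := by linarith

def Tlm (σ μ u t : ℝ) : R3 →ₗ[ℝ] R3 where
  toFun := Tmap σ μ u t
  map_add' x y := by
    ext i
    show _ = Tmap σ μ u t x i + Tmap σ μ u t y i
    simp only [Tmap, PiLp.toLp_apply]
    have h0 : (x + y) 0 = x 0 + y 0 := rfl
    have h1 : (x + y) 1 = x 1 + y 1 := rfl
    have h2 : (x + y) 2 = x 2 + y 2 := rfl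
    split_ifs <;> (try rw [h0]) <;> (try rw [h1]) <;> (try rw [h2]) <;> ring
  map_smul' c x := by
    ext i
    show _ = c * Tmap σ μ u t x i
    simp only [Tmap, PiLp.toLp_apply]
    have h0 : (c • x) 0 = c * x 0 := rfl
    have h1 : (c • x) 1 = c * x 1 := rfl
    have h2 : (c • x) 2 = c * x 2 := rfl
    split_ifs <;> (try rw [h0]) <;> (try rw [h1]) <;> (try rw [h2]) <;> ring

def Tclm (σ μ u t : ℝ) : R3 →L[ℝ] R3 := LinearMap.toContinuousLinearMap (Tlm σ μ u t)

lemma Tclm_apply (σ μ u t : ℝ) (v : R3) : Tclm σ μ u t v = Tmap σ μ u t v := rfl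

lemma Tmap_PU_two (σ μ u s : ℝ) (v : R3) : Tmap σ μ u s (PU v) 2 = exp (u * s) * v 2 := by
  simp [Tmap, PU]

lemma Tmap_PL_two (σ μ u s : ℝ) (v : R3) : Tmap σ μ u s (PL v) 2 = 0 := by
  simp [Tmap, PL]

lemma norm_Tmap_PL (σ μ u s : ℝ) (v : R3) :
    ‖Tmap σ μ u s (PL v)‖ = exp (σ * s) * ‖PL v‖ := by
  rw [norm3, normPL]
  have e0 : Tmap σ μ u s (PL v) 0 = exp (σ * s) * (cos (μ * s) * v 0 + sin (μ * s) * v 1) := by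
    simp [Tmap, PL]
  have e1 : Tmap σ μ u s (PL v) 1 = exp (σ * s) * (-(sin (μ * s)) * v 0 + cos (μ * s) * v 1) := by
    simp [Tmap, PL]
  rw [e0, e1, Tmap_PL_two]
  have key : (exp (σ * s) * (cos (μ * s) * v 0 + sin (μ * s) * v 1))^2 +
      (exp (σ * s) * (-(sin (μ * s)) * v 0 + cos (μ * s) * v 1))^2 + 0^2
      = (exp (σ * s))^2 * ((v 0)^2 + (v 1)^2) := by
    have h := sin_sq_add_cos_sq (μ * s)
    linear_combination (exp (σ * s))^2 * ((v 0)^2 + (v 1)^2) * h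
  rw [key, Real.sqrt_mul (sq_nonneg _), Real.sqrt_sq (exp_pos _).le]
lemma Gdiff {G : ℝ → R3 → R3} (hG : IsC1Flow G) (s : ℝ) : Differentiable ℝ (G s) := by
  have h1 : Differentiable ℝ (fun p : ℝ × R3 => G p.1 p.2) := hG.1.differentiable one_ne_zero
  intro w
  exact (h1 (s, w)).comp w ((differentiableAt_const (c := s) (x := w)).prodMk differentiableAt_id)

lemma key_mvt {u σ μ η : ℝ} {G : ℝ → R3 → R3} (hG : IsC1Flow G) (hη : 0 < η)
    (hD2 : ∀ t ∈ Icc (0:ℝ) 1, ∀ x ∈ B1, ∀ y : R3,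
      ‖fderiv ℝ (G t) x y - Tmap σ μ u t y‖ ≤ η * ‖y‖)
    {s : ℝ} (hs : s ∈ Icc (0:ℝ) 1) {y z : R3} (hy : y ∈ B1) (hz : z ∈ B1) :
    ‖G s y - G s z - Tmap σ μ u s (y - z)‖ ≤ η * ‖y - z‖ := by
  set f : R3 → R3 := fun w => G s w - Tclm σ μ u s w with hf
  have hdiff : ∀ w ∈ B1, DifferentiableAt ℝ f w :=
    fun w _ => (Gdiff hG s w).sub ((Tclm σ μ u s).differentiableAt)
  have hbound : ∀ w ∈ B1, ‖fderiv ℝ f w‖ ≤ η := by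
    intro w hw
    have hfd : fderiv ℝ f w = fderiv ℝ (G s) w - Tclm σ μ u s := by
      rw [hf]
      rw [fderiv_fun_sub (Gdiff hG s w) ((Tclm σ μ u s).differentiableAt),
        ContinuousLinearMap.fderiv]
    rw [hfd]
    refine ContinuousLinearMap.opNorm_le_bound _ hη.le (fun v => ?_)
    have := hD2 s hs w hw v
    simpa [ContinuousLinearMap.sub_apply, Tclm_apply] using this
  have hmvt := Convex.norm_image_sub_le_of_norm_fderiv_le hdiff hbound convex_B1 hz hy
  have heq : f y - f z = G s y - G s z - Tmap σ μ u s (y - z) := by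
    rw [hf]
    simp only
    rw [show Tmap σ μ u s (y - z) = Tclm σ μ u s (y - z) from rfl, map_sub]
    abel
  rwa [heq] at hmvt

lemma vert_step {u σ μ η rB : ℝ} {G : ℝ → R3 → R3} (hG : IsC1Flow G) (hη : 0 < η)
    (hB1B : B1 ⊆ Metric.closedBall (0 : R3) rB)
    (hD2 : ∀ t ∈ Icc (0:ℝ) 1, ∀ x ∈ B1, ∀ y : R3,
      ‖fderiv ℝ (G t) x y - Tmap σ μ u t y‖ ≤ η * ‖y‖)
    (hGB : ∀ t ∈ Icc (0:ℝ) 1, ∀ x ∈ B1, G t x ∈ Metric.closedBall (0 : R3) rB)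
    (hLinv : InvariantIn G Lset (Metric.closedBall 0 rB))
    {s : ℝ} (hs : s ∈ Icc (0:ℝ) 1) {y : R3} (hy : y ∈ B1) :
    |G s y 2 - exp (u * s) * y 2| ≤ η * |y 2| := by
  have hPLy : PL y ∈ B1 := PL_in_B1 hy
  -- G s (PL y) 2 = 0 by invariance of L
  have hL2 : G s (PL y) 2 = 0 := by
    have hmem : PL y ∈ Lset ∩ Metric.closedBall 0 rB := by
      refine ⟨?_, hB1B hPLy⟩
      show PL y 2 = 0
      simp [PL]
    have := hLinv (PL y) hmem (Icc 0 1) ⟨le_rfl, zero_le_one⟩ ordConnected_Icc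
      (fun τ hτ => hGB τ hτ (PL y) hPLy) s hs
    exact this
  have hkey := key_mvt hG hη hD2 hs hy hPLy
  rw [sub_PL] at hkey
  have hcomp : |(G s y - G s (PL y) - Tmap σ μ u s (PU y)) 2| ≤ η * |y 2| := by
    calc |(G s y - G s (PL y) - Tmap σ μ u s (PU y)) 2|
        ≤ ‖G s y - G s (PL y) - Tmap σ μ u s (PU y)‖ := abs2_le _
      _ ≤ η * ‖PU y‖ := hkey
      _ = η * |y 2| := by rw [normPU]
  have : (G s y - G s (PL y) - Tmap σ μ u s (PU y)) 2
      = G s y 2 - exp (u * s) * y 2 := by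
    show G s y 2 - G s (PL y) 2 - Tmap σ μ u s (PU y) 2 = _
    rw [hL2, Tmap_PU_two]; ring
  rwa [this] at hcomp

lemma horiz_step {u σ μ η rB : ℝ} {G : ℝ → R3 → R3} (hG : IsC1Flow G) (hη : 0 < η)
    (hB1B : B1 ⊆ Metric.closedBall (0 : R3) rB)
    (hD2 : ∀ t ∈ Icc (0:ℝ) 1, ∀ x ∈ B1, ∀ y : R3,
      ‖fderiv ℝ (G t) x y - Tmap σ μ u t y‖ ≤ η * ‖y‖)
    (hGB : ∀ t ∈ Icc (0:ℝ) 1, ∀ x ∈ B1, G t x ∈ Metric.closedBall (0 : R3) rB)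
    (hUinv : InvariantIn G Uset (Metric.closedBall 0 rB))
    {s : ℝ} (hs : s ∈ Icc (0:ℝ) 1) {y : R3} (hy : y ∈ B1) :
    ‖PL (G s y)‖ ≤ (exp (σ * s) + η) * ‖PL y‖ := by
  have hPUy : PU y ∈ B1 := PU_in_B1 hy
  have hU : PL (G s (PU y)) = 0 := by
    have hmem : PU y ∈ Uset ∩ Metric.closedBall 0 rB := by
      refine ⟨⟨?_, ?_⟩, hB1B hPUy⟩ <;> simp [PU]
    have hmem2 := hUinv (PU y) hmem (Icc 0 1) ⟨le_rfl, zero_le_one⟩ ordConnected_Icc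
      (fun τ hτ => hGB τ hτ (PU y) hPUy) s hs
    obtain ⟨h0, h1⟩ := hmem2
    ext i
    fin_cases i <;> simp [PL, h0, h1]
  have hkey := key_mvt hG hη hD2 hs hy hPUy
  rw [sub_PU] at hkey
  set w := G s y - G s (PU y) - Tmap σ μ u s (PL y) with hw
  have hdecomp : PL (G s y) = PL w + PL (Tmap σ μ u s (PL y)) := by
    rw [hw, PL_sub, PL_sub, hU]
    abel
  have hThoriz : PL (Tmap σ μ u s (PL y)) = Tmap σ μ u s (PL y) := by
    ext i
    show (if (i:ℕ) = 2 then 0 else Tmap σ μ u s (PL y) i) = Tmap σ μ u s (PL y) i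
    split_ifs with h
    · have : i = 2 := by omega
      rw [this, Tmap_PL_two]
    · rfl
  calc ‖PL (G s y)‖ ≤ ‖PL w‖ + ‖PL (Tmap σ μ u s (PL y))‖ := by
        rw [hdecomp]; exact norm_add_le _ _
    _ ≤ ‖w‖ + ‖Tmap σ μ u s (PL y)‖ := by
        rw [hThoriz]; exact add_le_add (normPL_le _) le_rfl
    _ ≤ η * ‖PL y‖ + exp (σ * s) * ‖PL y‖ := by
        rw [norm_Tmap_PL]; exact add_le_add hkey le_rfl
    _ = (exp (σ * s) + η) * ‖PL y‖ := by ring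

set_option maxHeartbeats 1000000 in
theorem statement11
    (u σ μ η rB : ℝ) (hu : 0 < u) (hσ : σ < 0) (hμ : 0 < μ) (hη : 0 < η)
    (hB1B : B1 ⊆ Metric.closedBall (0 : R3) rB)
    (G : ℝ → R3 → R3) (hG : IsC1Flow G) (hG0 : ∀ t : ℝ, G t 0 = 0)
    (hD2 : ∀ t ∈ Icc (0:ℝ) 1, ∀ x ∈ B1, ∀ y : R3,
      ‖fderiv ℝ (G t) x y - Tmap σ μ u t y‖ ≤ η * ‖y‖)
    (hGB : ∀ t ∈ Icc (0:ℝ) 1, ∀ x ∈ B1, G t x ∈ Metric.closedBall (0 : R3) rB)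
    (hLinv : InvariantIn G Lset (Metric.closedBall 0 rB))
    (hUinv : InvariantIn G Uset (Metric.closedBall 0 rB))
    (hησ : η < exp σ) (hησ2 : 1 + η * exp (-σ) < exp (-σ / 2)) (hσu : 0 < σ + u)
    (x : R3) (hxcyl : ‖PL x‖ = 1) (hx3pos : 0 < x 2) (hx3lt : x 2 < 1)
    (t : ℝ) (ht : 0 < t)
    (htravel : ∀ s ∈ Ico (0 : ℝ) t, 0 < G s x 2 ∧ G s x 2 < 1)
    (hhit : G t x 2 = 1)
    (n : ℕ) (hn1 : (n : ℝ) < t) (hn2 : t ≤ (n : ℝ) + 1) :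
    (n : ℝ) > 1 / (u + Real.log 2) * Real.log (1 / x 2) - 1 ∧
    ∀ r > (0 : ℝ), ∀ δstar ∈ Ioo (0 : ℝ) 1,
      1 + 2 / σ * Real.log r < 1 / (u + Real.log 2) * Real.log (1 / δstar) - 1 →
      x 2 < δstar →
      ‖G t x - e3‖ = ‖PL (G t x)‖ ∧ ‖PL (G t x)‖ < r := by
  set c := u + Real.log 2 with hc
  have hlog2 : 0 < Real.log 2 := Real.log_pos one_lt_two
  have hcpos : 0 < c := by rw [hc]; linarith
  have hexpσ1 : exp σ < 1 := by
    have := Real.exp_lt_exp.mpr hσ; simpa using this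
  have hη1 : η < 1 := hησ.trans hexpσ1
  have hexpu1 : 1 < exp u := by
    have := Real.exp_lt_exp.mpr hu; simpa using this
  have hbase_nonneg : (0:ℝ) ≤ exp σ + η := by positivity
  have hσtarget : exp σ + η < exp (σ / 2) := by
    have h := mul_lt_mul_of_pos_left hησ2 (exp_pos σ)
    have e1 : exp σ * (1 + η * exp (-σ)) = exp σ + η := by
      have h2 : exp σ * exp (-σ) = 1 := by rw [← Real.exp_add]; simp
      nlinarith [h2]
    have e2 : exp σ * exp (-σ / 2) = exp (σ / 2) := by
      rw [← Real.exp_add]; ring_nf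
    rw [e1, e2] at h; exact h
  have hσhalf1 : exp (σ / 2) < 1 := by
    have : σ / 2 < 0 := by linarith
    have := Real.exp_lt_exp.mpr this; simpa using this
  have hpowle1 : ∀ k : ℕ, (exp σ + η)^k ≤ 1 :=
    fun k => pow_le_one₀ hbase_nonneg (le_of_lt (hσtarget.trans hσhalf1))
  -- iteration
  have hmem : ∀ k : ℕ, k ≤ n → ‖PL (G (k:ℝ) x)‖ ≤ (exp σ + η)^k ∧
      G (k:ℝ) x 2 ≤ (2 * exp u)^k * x 2 := by
    intro k
    induction k with
    | zero =>
      intro _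
      rw [Nat.cast_zero, hG.2.1 x]
      constructor
      · rw [hxcyl, pow_zero]
      · rw [pow_zero, one_mul]
    | succ k ih =>
      intro hk
      have hk' : k ≤ n := Nat.le_of_succ_le hk
      obtain ⟨ih1, ih2⟩ := ih hk'
      have hklt : (k:ℝ) < t := lt_of_le_of_lt (by exact_mod_cast hk' : (k:ℝ) ≤ n) hn1
      have htrav := htravel (k:ℝ) ⟨Nat.cast_nonneg k, hklt⟩
      have hkB1 : G (k:ℝ) x ∈ B1 := by
        refine ⟨ih1.trans (hpowle1 k), ?_⟩
        rw [normPU, abs_of_pos htrav.1]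
        exact htrav.2.le
      have hstep : G ((k:ℝ) + 1) x = G 1 (G (k:ℝ) x) := by
        have := hG.2.2 (k:ℝ) 1 x
        rwa [add_comm] at this
      have hcast : ((k+1 : ℕ):ℝ) = (k:ℝ) + 1 := by push_cast; ring
      have h11 : (1:ℝ) ∈ Icc (0:ℝ) 1 := ⟨zero_le_one, le_rfl⟩
      constructor
      · rw [hcast, hstep]
        have hh := horiz_step hG hη hB1B hD2 hGB hUinv h11 hkB1
        rw [mul_one] at hh
        calc ‖PL (G 1 (G (k:ℝ) x))‖ ≤ (exp σ + η) * ‖PL (G (k:ℝ) x)‖ := hh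
          _ ≤ (exp σ + η) * (exp σ + η)^k := by
              exact mul_le_mul_of_nonneg_left ih1 hbase_nonneg
          _ = (exp σ + η)^(k+1) := by ring
      · rw [hcast, hstep]
        have hv := vert_step hG hη hB1B hD2 hGB hLinv h11 hkB1
        rw [mul_one] at hv
        have habs : |G (k:ℝ) x 2| = G (k:ℝ) x 2 := abs_of_pos htrav.1
        rw [habs] at hv
        have h1 : G 1 (G (k:ℝ) x) 2 ≤ (exp u + η) * G (k:ℝ) x 2 := by
          have := abs_le.mp hv
          nlinarith [this.2]
        have h2eu : (0:ℝ) < 2 * exp u := by positivity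
        calc G 1 (G (k:ℝ) x) 2 ≤ (exp u + η) * G (k:ℝ) x 2 := h1
          _ ≤ (2 * exp u) * G (k:ℝ) x 2 := by
              apply mul_le_mul_of_nonneg_right (by linarith) htrav.1.le
          _ ≤ (2 * exp u) * ((2 * exp u)^k * x 2) := by
              exact mul_le_mul_of_nonneg_left ih2 h2eu.le
          _ = (2 * exp u)^(k+1) * x 2 := by ring
  -- last fractional step
  obtain ⟨hmn1, hmn2⟩ := hmem n le_rfl
  have htravn := htravel (n:ℝ) ⟨Nat.cast_nonneg n, hn1⟩
  have hnB1 : G (n:ℝ) x ∈ B1 := by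
    refine ⟨hmn1.trans (hpowle1 n), ?_⟩
    rw [normPU, abs_of_pos htravn.1]
    exact htravn.2.le
  set s₀ := t - (n:ℝ) with hs₀def
  have hs₀ : s₀ ∈ Icc (0:ℝ) 1 := ⟨by simp only [hs₀def]; linarith, by simp only [hs₀def]; linarith⟩
  have hGt : G t x = G s₀ (G (n:ℝ) x) := by
    have := hG.2.2 (n:ℝ) s₀ x
    rwa [show s₀ + (n:ℝ) = t by rw [hs₀def]; ring] at this
  set a2 := G (n:ℝ) x 2 with ha2
  have ha2pos : 0 < a2 := htravn.1
  -- part 1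
  have hvert := vert_step hG hη hB1B hD2 hGB hLinv hs₀ hnB1
  rw [← ha2, abs_of_pos ha2pos] at hvert
  have hone : (1:ℝ) = G s₀ (G (n:ℝ) x) 2 := by rw [← hGt, hhit]
  have hus : exp (u * s₀) ≤ exp u := Real.exp_le_exp.mpr (by nlinarith [hs₀.2])
  have h1lt : 1 < (2 * exp u) * a2 := by
    have := abs_le.mp hvert
    nlinarith [this.2, hη1, hexpu1, ha2pos]
  have h1lt2 : 1 < (2 * exp u)^(n+1) * x 2 := by
    have h2eu : (0:ℝ) < 2 * exp u := by positivity
    calc (1:ℝ) < (2 * exp u) * a2 := h1lt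
      _ ≤ (2 * exp u) * ((2 * exp u)^n * x 2) := mul_le_mul_of_nonneg_left hmn2 h2eu.le
      _ = (2 * exp u)^(n+1) * x 2 := by ring
  have h2euexp : (2:ℝ) * exp u = exp c := by
    rw [hc, Real.exp_add, Real.exp_log two_pos]; ring
  have hlogineq : Real.log (1 / x 2) < ((n:ℝ) + 1) * c := by
    have hE : (2 * exp u)^(n+1) = exp (((n:ℝ)+1) * c) := by
      rw [h2euexp, ← Real.exp_nat_mul]
      push_cast; ring_nf
    have hfrac : 1 / x 2 < exp (((n:ℝ)+1) * c) := by
      rw [← hE]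
      rw [div_lt_iff₀ hx3pos]
      linarith
    calc Real.log (1 / x 2) < Real.log (exp (((n:ℝ)+1) * c)) :=
          Real.log_lt_log (by positivity) hfrac
      _ = ((n:ℝ)+1) * c := Real.log_exp _
  have hpart1 : (n : ℝ) > 1 / c * Real.log (1 / x 2) - 1 := by
    have h1 : 1 / c * Real.log (1 / x 2) < 1 / c * (((n:ℝ)+1) * c) :=
      mul_lt_mul_of_pos_left hlogineq (by positivity)
    have h2 : 1 / c * (((n:ℝ)+1) * c) = (n:ℝ) + 1 := by
      field_simp
    linarith
  refine ⟨hpart1, ?_⟩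
  -- part 2
  intro r hr δstar hδ hcond hxδ
  have heq : G t x - e3 = PL (G t x) := by
    ext i
    show G t x i - e3 i = PL (G t x) i
    fin_cases i <;> simp [e3, PL, hhit]
  refine ⟨by rw [heq], ?_⟩
  have hhor := horiz_step hG hη hB1B hD2 hGB hUinv hs₀ hnB1
  have hA : 1 + η < exp (-σ / 2) := by
    have h1 : (1:ℝ) ≤ exp (-σ) := Real.one_le_exp (by linarith)
    nlinarith
  have hσs₀ : exp (σ * s₀) ≤ 1 := Real.exp_le_one_iff.mpr (by nlinarith [hs₀.1])
  have hB : (exp σ + η)^n ≤ (exp (σ / 2))^n :=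
    pow_le_pow_left₀ hbase_nonneg hσtarget.le n
  have hbound : ‖PL (G t x)‖ < exp (σ * ((n:ℝ) - 1) / 2) := by
    rw [hGt]
    calc ‖PL (G s₀ (G (n:ℝ) x))‖ ≤ (exp (σ * s₀) + η) * ‖PL (G (n:ℝ) x)‖ := hhor
      _ ≤ (1 + η) * (exp σ + η)^n := by
          apply mul_le_mul (by linarith) hmn1 (norm_nonneg _) (by linarith)
      _ < exp (-σ / 2) * (exp (σ / 2))^n := by
          have hp : 0 < (exp (σ / 2))^n := pow_pos (exp_pos _) n
          have hq : 0 ≤ (exp σ + η)^n := pow_nonneg hbase_nonneg n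
          nlinarith
      _ = exp (σ * ((n:ℝ) - 1) / 2) := by
          rw [← Real.exp_nat_mul, ← Real.exp_add]
          ring_nf
  have hchain : (n:ℝ) - 1 > 2 / σ * Real.log r := by
    have hδpos := hδ.1
    have hlogmono : Real.log (1 / δstar) ≤ Real.log (1 / x 2) := by
      apply Real.log_le_log (by positivity)
      rw [div_le_div_iff₀ hδpos hx3pos]
      nlinarith
    have h3 : 1 / c * Real.log (1 / δstar) ≤ 1 / c * Real.log (1 / x 2) :=
      mul_le_mul_of_nonneg_left hlogmono (by positivity)
    linarith
  have hfinal : σ * ((n:ℝ) - 1) / 2 < Real.log r := by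
    have hσne : σ ≠ 0 := ne_of_lt hσ
    have h1 : σ * ((n:ℝ) - 1) < σ * (2 / σ * Real.log r) :=
      mul_lt_mul_of_neg_left hchain hσ
    have h2 : σ * (2 / σ * Real.log r) = 2 * Real.log r := by field_simp
    linarith
  calc ‖PL (G t x)‖ < exp (σ * ((n:ℝ) - 1) / 2) := hbound
    _ < r := by
        rw [← Real.exp_log hr]
        exact Real.exp_lt_exp.mpr hfinal
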